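/- Let ϖ be a primary prime in ℤ[i], k ∈ ℤ[i], and suppose ϖ^h ‖ k (i.e., ϖ^h ∣ k and ϖ^{h+1} ∤ k). If l ≤ h and l is odd, then g₂(k, ϖ^l) = 0; if l ≤ h and l is even, then g₂(k, ϖ^l) = φ(ϖ^l), the cardinality of the unit group of ℤ[i]/(ϖ^l). -/

import Mathlib

noncomputable section

open Complex
open scoped Classical

/-- The norm `N(n)` of a Gaussian integer, as a natural number. -/
def GInorm (n : GaussianInt) : ℕ := n.norm.natAbs

/-- The Gaussian integer `1 + i`. -/
def onePlusI : GaussianInt := ⟨1, 1⟩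

/-- `n` is primary: `n ≡ 1 (mod (1+i)³)`. -/
def GIPrimary (n : GaussianInt) : Prop := onePlusI ^ 3 ∣ n - 1

/-- The quadratic residue symbol `(x/ϖ)` at a prime `ϖ`: the unique `ζ ∈ {1, −1}` with
`ϖ ∣ x^((N(ϖ)−1)/2) − ζ` when `(x, ϖ) = 1`, and `0` otherwise. -/
def primQuadSym (ϖ x : GaussianInt) : GaussianInt :=
  if h : ∃ ζ ∈ ({1, -1} : Set GaussianInt), ϖ ∣ x ^ ((GInorm ϖ - 1) / 2) - ζ
  then h.choose else 0

/-- The quadratic residue symbol `(x/n)`, extended multiplicatively in `n` over the prime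
factorization of `n`. -/
def quadSym (n x : GaussianInt) : GaussianInt :=
  (Multiset.map (fun ϖ => primQuadSym ϖ x) (UniqueFactorizationMonoid.factors n)).prod

/-- The additive character `ẽ_i(z) = exp(2πi(z/(2i) − z̄/(2i)))`. -/
def eI (z : ℂ) : ℂ :=
  Complex.exp (2 * Real.pi * Complex.I *
    (z / (2 * Complex.I) - (starRingEnd ℂ) z / (2 * Complex.I)))

/-- A representative in `ℤ[i]` of a residue class modulo `n`. -/
def rep {n : GaussianInt} (x : GaussianInt ⧸ Ideal.span {n}) : GaussianInt :=
  Function.surjInv Ideal.Quotient.mk_surjective x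

/-- The quadratic Gauss sum `g₂(r, n) = Σ_{x mod n} (x/n) ẽ_i(rx/n)`. -/
def g2 (r n : GaussianInt) : ℂ :=
  ∑ᶠ x : GaussianInt ⧸ Ideal.span {n},
    GaussianInt.toComplex (quadSym n (rep x)) *
      eI (GaussianInt.toComplex (r * rep x) / GaussianInt.toComplex n)

/-- `φ(n) = #(ℤ[i]/(n))ˣ`. -/
def phiGI (n : GaussianInt) : ℕ := Nat.card ((GaussianInt ⧸ Ideal.span {n})ˣ)

namespace GaussAux

open GaussianInt UniqueFactorizationMonoid

/-! ### Module structure of `ℤ[i]` over `ℤ` -/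

def giEquiv : GaussianInt ≃+ (Fin 2 → ℤ) where
  toFun z := ![z.re, z.im]
  invFun v := ⟨v 0, v 1⟩
  left_inv z := by simp
  right_inv v := by funext i; fin_cases i <;> simp
  map_add' a b := by funext i; fin_cases i <;> simp

def giBasis : Module.Basis (Fin 2) ℤ GaussianInt :=
  Module.Basis.ofEquivFun giEquiv.toIntLinearEquiv

instance : Module.Free ℤ GaussianInt := Module.Free.of_basis giBasis
instance : Module.Finite ℤ GaussianInt := Module.Finite.of_basis giBasis

lemma algNorm_eq (z : GaussianInt) : Algebra.norm ℤ z = Zsqrtd.norm z := by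
  rw [Algebra.norm_eq_matrix_det giBasis, Matrix.det_fin_two]
  have hb0 : giBasis 0 = (1 : GaussianInt) := by
    simp [giBasis, Module.Basis.coe_ofEquivFun]
    rfl
  have hb1 : giBasis 1 = (⟨0,1⟩ : GaussianInt) := by
    simp [giBasis, Module.Basis.coe_ofEquivFun]
    rfl
  have hrepr : ∀ (w : GaussianInt) (i : Fin 2), giBasis.repr w i = ![w.re, w.im] i :=
    fun w i => Module.Basis.ofEquivFun_repr_apply _ w i
  simp only [Algebra.leftMulMatrix_eq_repr_mul, hrepr, hb0, hb1]
  simp [Zsqrtd.norm_def, Zsqrtd.re_mul, Zsqrtd.im_mul]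

lemma natCard_quotient (z : GaussianInt) :
    Nat.card (GaussianInt ⧸ Ideal.span {z}) = GInorm z := by
  have h := Ideal.absNorm_span_singleton z
  rwa [Ideal.absNorm_apply, Submodule.cardQuot_apply, algNorm_eq] at h

/-! ### Arithmetic facts about primary primes -/

lemma prime_not_dvd_two {ϖ : GaussianInt} (hϖ : Prime ϖ) (hprim : GIPrimary ϖ) :
    ¬ ϖ ∣ 2 := by
  intro h2
  have h2eq : (2 : GaussianInt) = (⟨0,-1⟩ : GaussianInt) * onePlusI ^ 2 := by
    ext <;> simp [onePlusI, pow_two, Zsqrtd.re_mul, Zsqrtd.im_mul]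
  rw [h2eq] at h2
  have hnu : ¬ IsUnit ϖ := hϖ.not_unit
  have hd : ϖ ∣ onePlusI := by
    rcases hϖ.2.2 _ _ h2 with h | h
    · exact absurd (isUnit_of_dvd_unit h (by
        refine IsUnit.of_mul_eq_one (⟨0,1⟩ : GaussianInt) ?_
        ext <;> simp [Zsqrtd.re_mul, Zsqrtd.im_mul])) hnu
    · exact hϖ.dvd_of_dvd_pow h
  have h1 : ϖ ∣ ϖ - 1 := hd.trans ((dvd_pow_self onePlusI (by norm_num : (3:ℕ) ≠ 0)).trans hprim)
  have h3 : ϖ ∣ 1 := by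
    have := dvd_sub (dvd_refl ϖ) h1
    simpa using this
  exact hnu (isUnit_of_dvd_one h3)

lemma ginorm_coe (z : GaussianInt) : (GInorm z : ℤ) = Zsqrtd.norm z :=
  Int.natAbs_of_nonneg (Zsqrtd.norm_nonneg (by norm_num) z)

lemma two_not_unit : ¬ IsUnit (2 : GaussianInt) := by
  rw [← Zsqrtd.norm_eq_one_iff]
  norm_num [Zsqrtd.norm_def]

lemma ginorm_odd {ϖ : GaussianInt} (hϖ : Prime ϖ) (hprim : GIPrimary ϖ) :
    Odd (GInorm ϖ) := by
  rcases Nat.even_or_odd (GInorm ϖ) with he | ho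
  swap
  · exact ho
  exfalso
  have h2 : ¬ ϖ ∣ 2 := prime_not_dvd_two hϖ hprim
  have hZ : (2:ℤ) ∣ ϖ.re * ϖ.re + ϖ.im * ϖ.im := by
    have h' : (2:ℤ) ∣ (GInorm ϖ : ℤ) := by exact_mod_cast he.two_dvd
    rw [ginorm_coe, Zsqrtd.norm_def] at h'
    convert h' using 1; ring
  rcases Int.even_or_odd ϖ.re with hre | hre <;> rcases Int.even_or_odd ϖ.im with him | him
  · -- both even : 2 ∣ ϖ
    obtain ⟨a, ha⟩ := hre
    obtain ⟨b, hb⟩ := him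
    have hdd : (2 : GaussianInt) ∣ ϖ := ⟨⟨a, b⟩, by ext <;> simp [Zsqrtd.re_mul, Zsqrtd.im_mul] <;> omega⟩
    obtain ⟨c, hc⟩ := hdd
    rcases hϖ.irreducible.isUnit_or_isUnit hc with hu | hu
    · exact two_not_unit hu
    · exact h2 (hc ▸ (Associated.symm ⟨hu.unit, rfl⟩).dvd)
  · -- re even, im odd : sum odd
    obtain ⟨a, ha⟩ := hre
    obtain ⟨b, hb⟩ := him
    have : ϖ.re * ϖ.re + ϖ.im * ϖ.im = 2*(2*a*a + 2*b*b + 2*b) + 1 := by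
      rw [ha, hb]; ring
    omega
  · obtain ⟨a, ha⟩ := hre
    obtain ⟨b, hb⟩ := him
    have : ϖ.re * ϖ.re + ϖ.im * ϖ.im = 2*(2*a*a + 2*a + 2*b*b) + 1 := by
      rw [ha, hb]; ring
    omega
  · -- both odd : norm (ϖ - 1) is odd but divisible by 2
    have hd : onePlusI ∣ ϖ - 1 :=
      (dvd_pow_self onePlusI (by norm_num : (3:ℕ) ≠ 0)).trans hprim
    obtain ⟨c, hc⟩ := hd
    have hnorm : Zsqrtd.norm (ϖ - 1) = Zsqrtd.norm onePlusI * Zsqrtd.norm c := by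
      rw [hc, Zsqrtd.norm_mul]
    have h2n : (2:ℤ) ∣ Zsqrtd.norm (ϖ - 1) := by
      have hno : Zsqrtd.norm onePlusI = 2 := by norm_num [onePlusI, Zsqrtd.norm_def]
      rw [hnorm, hno]
      exact dvd_mul_right 2 (Zsqrtd.norm c)
    have : Zsqrtd.norm (ϖ - 1) = (ϖ.re - 1) * (ϖ.re - 1) + ϖ.im * ϖ.im := by
      simp [Zsqrtd.norm_def]
    rw [this] at h2n
    obtain ⟨a, ha⟩ := hre
    obtain ⟨b, hb⟩ := him
    have : (ϖ.re - 1) * (ϖ.re - 1) + ϖ.im * ϖ.im = 2*(2*a*a + 2*b*b + 2*b) + 1 := by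
      rw [ha, hb]; ring
    omega

lemma ginorm_ge {ϖ : GaussianInt} (hϖ : Prime ϖ) (hprim : GIPrimary ϖ) :
    3 ≤ GInorm ϖ := by
  have hodd := ginorm_odd hϖ hprim
  have h0 : GInorm ϖ ≠ 0 := by
    intro h
    have : Zsqrtd.norm ϖ = 0 := by
      have := ginorm_coe ϖ; rw [h] at this; simpa using this.symm
    exact hϖ.ne_zero ((Zsqrtd.norm_eq_zero_iff (by norm_num) ϖ).mp this)
  have h1 : GInorm ϖ ≠ 1 := fun h => hϖ.not_unit (Zsqrtd.norm_eq_one_iff.mp h)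
  obtain ⟨t, ht⟩ := hodd
  omega

lemma m_facts {ϖ : GaussianInt} (hϖ : Prime ϖ) (hprim : GIPrimary ϖ) :
    1 ≤ (GInorm ϖ - 1) / 2 ∧ 2 * ((GInorm ϖ - 1) / 2) = GInorm ϖ - 1 := by
  obtain ⟨t, ht⟩ := ginorm_odd hϖ hprim
  have h3 := ginorm_ge hϖ hprim
  omega

/-! ### Basic properties of `primQuadSym` -/

lemma zeta_uniq {ϖ ζ ζ' : GaussianInt} (h2 : ¬ ϖ ∣ 2)
    (hz : ζ ∈ ({1, -1} : Set GaussianInt)) (hz' : ζ' ∈ ({1, -1} : Set GaussianInt))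
    (hd : ϖ ∣ ζ - ζ') : ζ = ζ' := by
  simp only [Set.mem_insert_iff, Set.mem_singleton_iff] at hz hz'
  rcases hz with rfl | rfl <;> rcases hz' with rfl | rfl
  · rfl
  · exact absurd (by simpa [one_add_one_eq_two] using hd : ϖ ∣ 2) h2
  · exact absurd (by rw [show (-1 : GaussianInt) - 1 = -2 by ring] at hd; exact (dvd_neg.mp hd)) h2
  · rfl

lemma psym_eq {ϖ a ζ : GaussianInt} (h2 : ¬ ϖ ∣ 2)
    (hz : ζ ∈ ({1, -1} : Set GaussianInt)) (hd : ϖ ∣ a ^ ((GInorm ϖ - 1) / 2) - ζ) :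
    primQuadSym ϖ a = ζ := by
  unfold primQuadSym
  have hex : ∃ ζ' ∈ ({1, -1} : Set GaussianInt), ϖ ∣ a ^ ((GInorm ϖ - 1) / 2) - ζ' := ⟨ζ, hz, hd⟩
  rw [dif_pos hex]
  obtain ⟨hz', hd'⟩ := hex.choose_spec
  refine zeta_uniq h2 hz' hz ?_
  have := dvd_sub hd hd'
  have h' : a ^ ((GInorm ϖ - 1) / 2) - ζ - (a ^ ((GInorm ϖ - 1) / 2) - hex.choose)
      = hex.choose - ζ := by ring
  rw [h'] at this
  exact this

lemma psym_zero {ϖ a : GaussianInt} (hm : 1 ≤ (GInorm ϖ - 1) / 2) (hu : ¬ IsUnit ϖ)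
    (ha : ϖ ∣ a) : primQuadSym ϖ a = 0 := by
  unfold primQuadSym
  rw [dif_neg]
  rintro ⟨ζ, hz, hd⟩
  have hpow : ϖ ∣ a ^ ((GInorm ϖ - 1) / 2) := dvd_pow ha (by omega)
  have hzdvd : ϖ ∣ ζ := by
    have := dvd_sub hpow hd
    simpa using this
  simp only [Set.mem_insert_iff, Set.mem_singleton_iff] at hz
  rcases hz with rfl | rfl
  · exact hu (isUnit_of_dvd_one hzdvd)
  · exact hu (isUnit_of_dvd_one (by simpa using dvd_neg.mpr hzdvd))

/-! ### Euler's criterion -/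

lemma exists_zeta {ϖ : GaussianInt} (hϖ : Prime ϖ) (hprim : GIPrimary ϖ) {a : GaussianInt}
    (ha : ¬ ϖ ∣ a) :
    ∃ ζ ∈ ({1, -1} : Set GaussianInt), ϖ ∣ a ^ ((GInorm ϖ - 1) / 2) - ζ := by
  haveI hmax : (Ideal.span {ϖ}).IsMaximal :=
    PrincipalIdealRing.isMaximal_of_irreducible hϖ.irreducible
  letI : Field (GaussianInt ⧸ Ideal.span {ϖ}) := Ideal.Quotient.field _
  letI : Fintype (GaussianInt ⧸ Ideal.span {ϖ}) :=
    @Fintype.ofFinite _ (Ideal.finiteQuotientOfFreeOfNeBot _ (by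
      rw [Ne, Ideal.span_singleton_eq_bot]; exact hϖ.ne_zero))
  have hcard : Fintype.card (GaussianInt ⧸ Ideal.span {ϖ}) = GInorm ϖ := by
    rw [← Nat.card_eq_fintype_card, natCard_quotient]
  set x : GaussianInt ⧸ Ideal.span {ϖ} := Ideal.Quotient.mk (Ideal.span {ϖ}) a with hx
  have hx0 : x ≠ 0 := by
    rw [hx, Ne, Ideal.Quotient.eq_zero_iff_mem, Ideal.mem_span_singleton]
    exact ha
  have h1 : x ^ (GInorm ϖ - 1) = 1 := by
    rw [← hcard]
    exact FiniteField.pow_card_sub_one_eq_one x hx0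
  obtain ⟨hm1, hm2⟩ := m_facts hϖ hprim
  have hsq : x ^ ((GInorm ϖ - 1) / 2) * x ^ ((GInorm ϖ - 1) / 2) = 1 := by
    rw [← pow_add]
    rw [show (GInorm ϖ - 1) / 2 + (GInorm ϖ - 1) / 2 = GInorm ϖ - 1 by omega]
    exact h1
  have key : ∀ ζ : GaussianInt, x ^ ((GInorm ϖ - 1) / 2) = Ideal.Quotient.mk _ ζ →
      ϖ ∣ a ^ ((GInorm ϖ - 1) / 2) - ζ := by
    intro ζ hζ
    rw [← Ideal.mem_span_singleton, ← Ideal.Quotient.eq_zero_iff_mem, map_sub, map_pow, ← hx, hζ,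
      sub_self]
  rcases mul_self_eq_one_iff.mp hsq with h | h
  · exact ⟨1, by simp, key 1 (by rw [h, map_one])⟩
  · exact ⟨-1, by simp, key (-1) (by rw [h, map_neg, map_one])⟩

lemma exists_nonres {ϖ : GaussianInt} (hϖ : Prime ϖ) (hprim : GIPrimary ϖ) :
    ∃ b : GaussianInt, ϖ ∣ b ^ ((GInorm ϖ - 1) / 2) + 1 := by
  haveI hmax : (Ideal.span {ϖ}).IsMaximal :=
    PrincipalIdealRing.isMaximal_of_irreducible hϖ.irreducible
  letI : Field (GaussianInt ⧸ Ideal.span {ϖ}) := Ideal.Quotient.field _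
  letI : Fintype (GaussianInt ⧸ Ideal.span {ϖ}) :=
    @Fintype.ofFinite _ (Ideal.finiteQuotientOfFreeOfNeBot _ (by
      rw [Ne, Ideal.span_singleton_eq_bot]; exact hϖ.ne_zero))
  have hcard : Fintype.card (GaussianInt ⧸ Ideal.span {ϖ}) = GInorm ϖ := by
    rw [← Nat.card_eq_fintype_card, natCard_quotient]
  obtain ⟨t, ht⟩ := ginorm_odd hϖ hprim
  have h3 := ginorm_ge hϖ hprim
  have hchar : ringChar (GaussianInt ⧸ Ideal.span {ϖ}) ≠ 2 := by
    rw [Ne, FiniteField.even_card_iff_char_two, hcard]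
    omega
  obtain ⟨c, hc⟩ := FiniteField.exists_nonsquare hchar
  have hc0 : c ≠ 0 := fun h => hc ⟨0, by simp [h]⟩
  have hpow : c ^ (Fintype.card (GaussianInt ⧸ Ideal.span {ϖ}) / 2) ≠ 1 := by
    intro h
    exact hc ((FiniteField.isSquare_iff hchar hc0).mpr h)
  have hmq : Fintype.card (GaussianInt ⧸ Ideal.span {ϖ}) / 2 = (GInorm ϖ - 1) / 2 := by
    rw [hcard]; omega
  rw [hmq] at hpow
  have h1 : c ^ (GInorm ϖ - 1) = 1 := by
    rw [← hcard]
    exact FiniteField.pow_card_sub_one_eq_one c hc0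
  have hsq : c ^ ((GInorm ϖ - 1) / 2) * c ^ ((GInorm ϖ - 1) / 2) = 1 := by
    rw [← pow_add, show (GInorm ϖ - 1) / 2 + (GInorm ϖ - 1) / 2 = GInorm ϖ - 1 by omega]
    exact h1
  have hneg : c ^ ((GInorm ϖ - 1) / 2) = -1 := by
    rcases mul_self_eq_one_iff.mp hsq with h | h
    · exact absurd h hpow
    · exact h
  obtain ⟨b, rfl⟩ := Ideal.Quotient.mk_surjective c
  refine ⟨b, ?_⟩
  rw [← Ideal.mem_span_singleton, ← Ideal.Quotient.eq_zero_iff_mem, map_add, map_pow, map_one,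
    hneg]
  ring

/-! ### `quadSym` at prime powers -/

lemma psym_assoc {ϖ q : GaussianInt} (hϖ : Prime ϖ) (hprim : GIPrimary ϖ)
    (hq : Associated ϖ q) (a : GaussianInt) :
    primQuadSym q a = primQuadSym ϖ a := by
  have h2 : ¬ ϖ ∣ 2 := prime_not_dvd_two hϖ hprim
  have hnorm : GInorm q = GInorm ϖ := by
    obtain ⟨u, rfl⟩ := hq
    unfold GInorm
    rw [Zsqrtd.norm_mul, Int.natAbs_mul, Zsqrtd.norm_eq_one_iff.mpr u.isUnit, mul_one]
  have hq2 : ¬ q ∣ 2 := fun hdq => h2 (hq.dvd.trans hdq)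
  obtain ⟨hm1, hm2⟩ := m_facts hϖ hprim
  by_cases ha : ϖ ∣ a
  · rw [psym_zero hm1 hϖ.not_unit ha,
      psym_zero (by rw [hnorm]; exact hm1)
        (fun hu => hϖ.not_unit (hq.symm.isUnit hu)) (hq.symm.dvd.trans ha)]
  · obtain ⟨ζ, hz, hd⟩ := exists_zeta hϖ hprim ha
    rw [psym_eq h2 hz hd, psym_eq hq2 hz (by rw [hnorm]; exact hq.symm.dvd.trans hd)]

lemma quadSym_pow {ϖ : GaussianInt} (hϖ : Prime ϖ) (hprim : GIPrimary ϖ) (l : ℕ)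
    (a : GaussianInt) : quadSym (ϖ ^ l) a = primQuadSym ϖ a ^ l := by
  unfold quadSym
  have hcongr : ∀ q ∈ factors (ϖ ^ l), primQuadSym q a = primQuadSym ϖ a := by
    intro q hqmem
    have hqp : Prime q := prime_of_factor q hqmem
    have hdq : q ∣ ϖ := hqp.dvd_of_dvd_pow (dvd_of_mem_factors hqmem)
    exact psym_assoc hϖ hprim ((hqp.associated_of_dvd hϖ hdq).symm) a
  rw [Multiset.map_congr rfl hcongr, Multiset.map_const', Multiset.prod_replicate]
  congr 1
  obtain ⟨p, -, hfac⟩ := prime_factors_irreducible hϖ.irreducible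
    ⟨fun q hq => prime_of_factor q hq, factors_prod hϖ.ne_zero⟩
  have hrel := Multiset.card_eq_card_of_rel (factors_pow (x := ϖ) l)
  rw [Multiset.card_nsmul, hfac] at hrel
  simpa using hrel

/-! ### The additive character is trivial on Gaussian integers -/

lemma eI_gaussian (g : GaussianInt) : eI (GaussianInt.toComplex g) = 1 := by
  unfold eI
  have hconj : (starRingEnd ℂ) (GaussianInt.toComplex g) = (g.re : ℂ) - g.im * I := by
    rw [show GaussianInt.toComplex g = (g : ℂ) from rfl, toComplex_def]
    simp [Complex.conj_I]
    ring
  rw [hconj, show GaussianInt.toComplex g = (g : ℂ) from rfl, toComplex_def]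
  have harg : ((g.re : ℂ) + g.im * I) / (2 * I) - ((g.re : ℂ) - g.im * I) / (2 * I)
      = (g.im : ℂ) := by
    field_simp
    ring
  rw [harg]
  rw [show 2 * (Real.pi : ℂ) * I * (g.im : ℂ) = (g.im : ℤ) * (2 * Real.pi * I) by push_cast; ring]
  exact Complex.exp_int_mul_two_pi_mul_I g.im

/-! ### Units of the quotient -/

def unitsEquivIsUnit (M : Type*) [Monoid M] : Mˣ ≃ {x : M // IsUnit x} where
  toFun u := ⟨u, u.isUnit⟩
  invFun x := x.2.unit
  left_inv u := Units.ext (IsUnit.unit_spec _)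
  right_inv x := Subtype.ext (IsUnit.unit_spec x.2)

end GaussAux

open GaussAux UniqueFactorizationMonoid

theorem gauss_sum_prime_power_small (ϖ k : GaussianInt) (h l : ℕ) (hϖ : Prime ϖ)
    (hprim : GIPrimary ϖ) (hdvd : ϖ ^ h ∣ k) (hndvd : ¬ ϖ ^ (h + 1) ∣ k) (hl : l ≤ h) :
    (Odd l → g2 k (ϖ ^ l) = 0) ∧ (Even l → g2 k (ϖ ^ l) = (phiGI (ϖ ^ l) : ℂ)) := by
  classical
  have h2 : ¬ ϖ ∣ 2 := prime_not_dvd_two hϖ hprim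
  obtain ⟨hm1, hm2⟩ := m_facts hϖ hprim
  rcases Nat.eq_zero_or_pos l with rfl | hlpos
  · -- l = 0
    constructor
    · rintro ⟨t, ht⟩; omega
    · intro _
      have h1 : (ϖ ^ 0 : GaussianInt) = 1 := pow_zero ϖ
      rw [h1]
      haveI hsub : Subsingleton (GaussianInt ⧸ Ideal.span {(1 : GaussianInt)}) := by
        rw [Ideal.Quotient.subsingleton_iff, Ideal.span_singleton_one]
      letI : Fintype (GaussianInt ⧸ Ideal.span {(1 : GaussianInt)}) :=
        Fintype.ofSubsingleton (0 : GaussianInt ⧸ Ideal.span {(1 : GaussianInt)})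
      have hterm : ∀ x : GaussianInt ⧸ Ideal.span {(1 : GaussianInt)},
          GaussianInt.toComplex (quadSym 1 (rep x)) *
            eI (GaussianInt.toComplex (k * rep x) / GaussianInt.toComplex 1) = 1 := by
        intro x
        have hq : quadSym 1 (rep x) = 1 := by
          unfold quadSym
          rw [factors_one]
          simp
        rw [hq, map_one, one_mul, div_one, eI_gaussian]
      rw [g2, finsum_eq_sum_of_fintype, Finset.sum_congr rfl (fun x _ => hterm x)]
      haveI : Subsingleton ((GaussianInt ⧸ Ideal.span {(1 : GaussianInt)})ˣ) :=
        ⟨fun u v => Units.ext (Subsingleton.elim _ _)⟩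
      haveI : Unique ((GaussianInt ⧸ Ideal.span {(1 : GaussianInt)})ˣ) :=
        uniqueOfSubsingleton 1
      rw [phiGI, Nat.card_unique]
      simp
  · -- l ≥ 1
    have hl0 : l ≠ 0 := hlpos.ne'
    have hne : (ϖ ^ l : GaussianInt) ≠ 0 := pow_ne_zero _ hϖ.ne_zero
    letI : Fintype (GaussianInt ⧸ Ideal.span {(ϖ ^ l : GaussianInt)}) :=
      @Fintype.ofFinite _ (Ideal.finiteQuotientOfFreeOfNeBot _ (by rwa [Ne, Ideal.span_singleton_eq_bot]))
    set Q := GaussianInt ⧸ Ideal.span {(ϖ ^ l : GaussianInt)} with hQ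
    have hmk : ∀ x : Q, Ideal.Quotient.mk (Ideal.span {(ϖ ^ l : GaussianInt)}) (rep x) = x :=
      fun x => Function.surjInv_eq _ x
    -- the Gauss sum simplifies to a character sum
    have hg2 : g2 k (ϖ ^ l) =
        ∑ x : Q, GaussianInt.toComplex (primQuadSym ϖ (rep x) ^ l) := by
      rw [g2, finsum_eq_sum_of_fintype]
      refine Finset.sum_congr rfl fun x _ => ?_
      rw [quadSym_pow hϖ hprim]
      have hk : (ϖ ^ l : GaussianInt) ∣ k := (pow_dvd_pow ϖ hl).trans hdvd
      obtain ⟨c, hc⟩ : (ϖ ^ l : GaussianInt) ∣ k * rep x := hk.mul_right _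
      have hdiv : GaussianInt.toComplex (k * rep x) / GaussianInt.toComplex (ϖ ^ l)
          = GaussianInt.toComplex c := by
        rw [hc, map_mul, mul_comm, mul_div_assoc, div_self (by
          rw [Ne, show GaussianInt.toComplex (ϖ ^ l) = ((ϖ ^ l : GaussianInt) : ℂ) from rfl,
            GaussianInt.toComplex_eq_zero]
          exact hne), mul_one]
      rw [hdiv, eI_gaussian, mul_one]
    -- unit characterization
    have hunit : ∀ a : GaussianInt,
        IsUnit (Ideal.Quotient.mk (Ideal.span {(ϖ ^ l : GaussianInt)}) a) ↔ ¬ ϖ ∣ a := by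
      intro a
      constructor
      · intro hu hdvda
        obtain ⟨u, hu⟩ := hu
        obtain ⟨b, hb⟩ := Ideal.Quotient.mk_surjective (I := Ideal.span {(ϖ ^ l : GaussianInt)})
          (↑u⁻¹ : Q)
        have hmul : Ideal.Quotient.mk (Ideal.span {(ϖ ^ l : GaussianInt)}) (a * b) = 1 := by
          rw [map_mul, ← hu, hb]
          exact u.mul_inv
        have hmem : (ϖ ^ l : GaussianInt) ∣ a * b - 1 := by
          rw [← Ideal.mem_span_singleton, ← Ideal.Quotient.eq_zero_iff_mem, map_sub, hmul,
            map_one, sub_self]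
        have hϖab : ϖ ∣ a * b - 1 := (dvd_pow_self ϖ hl0).trans hmem
        have hone : ϖ ∣ 1 := by
          have := dvd_sub (hdvda.mul_right b) hϖab
          simpa using this
        exact hϖ.not_unit (isUnit_of_dvd_one hone)
      · intro ha
        have hco : IsCoprime a (ϖ ^ l) := ((hϖ.coprime_iff_not_dvd.mpr ha).symm).pow_right
        obtain ⟨u, v, huv⟩ := hco
        refine IsUnit.of_mul_eq_one (Ideal.Quotient.mk _ u) ?_
        rw [← map_mul, ← map_one (Ideal.Quotient.mk (Ideal.span {(ϖ ^ l : GaussianInt)})),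
          Ideal.Quotient.eq, Ideal.mem_span_singleton]
        exact ⟨-v, by linear_combination huv⟩
    constructor
    · -- odd case
      intro hodd
      rw [hg2]
      obtain ⟨b, hb⟩ := exists_nonres hϖ hprim
      have hbnd : ¬ ϖ ∣ b := by
        intro hdb
        have hone : ϖ ∣ 1 := by
          have := dvd_sub hb (dvd_pow hdb (by omega : (GInorm ϖ - 1) / 2 ≠ 0))
          simpa using this
        exact hϖ.not_unit (isUnit_of_dvd_one hone)
      have hub : IsUnit (Ideal.Quotient.mk (Ideal.span {(ϖ ^ l : GaussianInt)}) b) :=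
        (hunit b).mpr hbnd
      set u : Qˣ := hub.unit with hu
      have huval : (u : Q) = Ideal.Quotient.mk (Ideal.span {(ϖ ^ l : GaussianInt)}) b :=
        IsUnit.unit_spec hub
      have hperm := Equiv.sum_comp (Units.mulLeft u)
        (fun x : Q => GaussianInt.toComplex (primQuadSym ϖ (rep x) ^ l))
      have hneg : ∀ x : Q,
          GaussianInt.toComplex (primQuadSym ϖ (rep ((u : Q) * x)) ^ l)
            = - GaussianInt.toComplex (primQuadSym ϖ (rep x) ^ l) := by
        intro x
        have hcong : ϖ ∣ rep ((u : Q) * x) - b * rep x := by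
          have hz : Ideal.Quotient.mk (Ideal.span {(ϖ ^ l : GaussianInt)})
              (rep ((u : Q) * x) - b * rep x) = 0 := by
            rw [map_sub, hmk, map_mul, hmk, ← huval, sub_self]
          rw [Ideal.Quotient.eq_zero_iff_mem, Ideal.mem_span_singleton] at hz
          exact (dvd_pow_self ϖ hl0).trans hz
        by_cases hx : ϖ ∣ rep x
        · have hux : ϖ ∣ rep ((u : Q) * x) := by
            have := dvd_add hcong (hx.mul_left b)
            simpa using this
          rw [psym_zero hm1 hϖ.not_unit hx, psym_zero hm1 hϖ.not_unit hux,
            zero_pow hl0, map_zero, neg_zero]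
        · obtain ⟨ζ, hzmem, hzd⟩ := exists_zeta hϖ hprim hx
          have hζx : primQuadSym ϖ (rep x) = ζ := psym_eq h2 hzmem hzd
          have e1 : ϖ ∣ rep ((u : Q) * x) ^ ((GInorm ϖ - 1) / 2)
              - (b * rep x) ^ ((GInorm ϖ - 1) / 2) :=
            hcong.trans (sub_dvd_pow_sub_pow _ _ _)
          have e2 : ϖ ∣ (b * rep x) ^ ((GInorm ϖ - 1) / 2) - (-ζ) := by
            have hring : (b * rep x) ^ ((GInorm ϖ - 1) / 2) - (-ζ)
                = (b ^ ((GInorm ϖ - 1) / 2) + 1) * rep x ^ ((GInorm ϖ - 1) / 2)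
                  - (rep x ^ ((GInorm ϖ - 1) / 2) - ζ) := by
              rw [mul_pow]; ring
            rw [hring]
            exact dvd_sub (hb.mul_right _) hzd
          have hd2 : ϖ ∣ rep ((u : Q) * x) ^ ((GInorm ϖ - 1) / 2) - (-ζ) := by
            have := dvd_add e1 e2
            rwa [sub_add_sub_cancel] at this
          have hmem' : -ζ ∈ ({1, -1} : Set GaussianInt) := by
            simp only [Set.mem_insert_iff, Set.mem_singleton_iff] at hzmem ⊢
            rcases hzmem with rfl | rfl <;> simp
          have hζux : primQuadSym ϖ (rep ((u : Q) * x)) = -ζ := psym_eq h2 hmem' hd2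
          rw [hζx, hζux]
          simp only [Set.mem_insert_iff, Set.mem_singleton_iff] at hzmem
          rcases hzmem with rfl | rfl
          · rw [one_pow, show ((-1 : GaussianInt)) ^ l = -1 from hodd.neg_one_pow]
            simp
          · rw [neg_neg, one_pow, show ((-1 : GaussianInt)) ^ l = -1 from hodd.neg_one_pow]
            simp
      have hS : (∑ x : Q, GaussianInt.toComplex (primQuadSym ϖ (rep x) ^ l))
          = - ∑ x : Q, GaussianInt.toComplex (primQuadSym ϖ (rep x) ^ l) := by
        conv_lhs => rw [← hperm]
        refine Eq.trans (Finset.sum_congr rfl fun x _ => hneg x) ?_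
        rw [Finset.sum_neg_distrib]
      linear_combination hS / 2
    · -- even case
      intro heven
      rw [hg2]
      have hterm : ∀ x : Q, GaussianInt.toComplex (primQuadSym ϖ (rep x) ^ l)
          = if IsUnit x then (1 : ℂ) else 0 := by
        intro x
        by_cases hx : ϖ ∣ rep x
        · rw [if_neg (by rw [← hmk x]; exact fun hu => ((hunit (rep x)).mp hu) hx),
            psym_zero hm1 hϖ.not_unit hx, zero_pow hl0, map_zero]
        · obtain ⟨ζ, hzmem, hzd⟩ := exists_zeta hϖ hprim hx
          rw [if_pos (by rw [← hmk x]; exact (hunit (rep x)).mpr hx),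
            psym_eq h2 hzmem hzd]
          simp only [Set.mem_insert_iff, Set.mem_singleton_iff] at hzmem
          rcases hzmem with rfl | rfl
          · rw [one_pow, map_one]
          · rw [heven.neg_one_pow, map_one]
      rw [Finset.sum_congr rfl fun x _ => hterm x, Finset.sum_boole]
      congr 1
      rw [phiGI, Nat.card_eq_fintype_card, Fintype.card_congr (unitsEquivIsUnit Q),
        Fintype.card_subtype]
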